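/- For every positive integer n and every k with 1 ≤ k ≤ n-1, the number n divides C(n-1+k, n-1) * C(2n-k, n+1), i.e., d_{n,k} = (1/n) * C(n-1+k, n-1) * C(2n-k, n+1) is a nonnegative integer. -/
import Mathlib


theorem stmt_4 (n k : ℕ) (hn : 0 < n) (hk1 : 1 ≤ k) (hk2 : k ≤ n - 1) :
    n ∣ Nat.choose (n - 1 + k) (n - 1) * Nat.choose (2 * n - k) (n + 1) := by
  have hkn : k ≤ n := le_trans hk2 (Nat.sub_le n 1)
  have h1 : Nat.choose (n - 1 + k) ((n - 1) + 1) * ((n - 1) + 1)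
      = Nat.choose (n - 1 + k) (n - 1) * ((n - 1 + k) - (n - 1)) :=
    Nat.choose_succ_right_eq _ _
  have e1 : (n - 1) + 1 = n := by omega
  have e2 : (n - 1 + k) - (n - 1) = k := by omega
  rw [e1, e2] at h1
  have h2 : Nat.choose (2 * n - k) (n + 1) * (n + 1)
      = Nat.choose (2 * n - k) n * ((2 * n - k) - n) :=
    Nat.choose_succ_right_eq _ _
  have e3 : (2 * n - k) - n = n - k := by omega
  rw [e3] at h2
  rw [← ZMod.natCast_eq_zero_iff]
  have c1 : (Nat.choose (n - 1 + k) n : ZMod n) * (n : ZMod n)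
      = (Nat.choose (n - 1 + k) (n - 1) : ZMod n) * (k : ZMod n) := by
    exact_mod_cast congrArg (Nat.cast : ℕ → ZMod n) h1
  have c2 : (Nat.choose (2 * n - k) (n + 1) : ZMod n) * ((n : ZMod n) + 1)
      = (Nat.choose (2 * n - k) n : ZMod n) * ((n : ZMod n) - (k : ZMod n)) := by
    have := congrArg (Nat.cast : ℕ → ZMod n) h2
    push_cast [Nat.cast_sub hkn] at this
    exact_mod_cast this
  have hn0 : (n : ZMod n) = 0 := ZMod.natCast_self n
  rw [hn0, mul_zero] at c1
  rw [hn0, zero_add, mul_one, zero_sub] at c2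
  push_cast
  rw [c2]
  ring_nf
  rw [mul_right_comm, ← c1, zero_mul, neg_zero]
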